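/- Assume the two-strain SI model hypotheses. If R_0^x = R_0^y > 1, then the set of equilibria of the two-strain SI system is exactly {E_0} ∪ {E*_α : α ∈ [1,2]}, where E_0 = (Λ/μ_S, 0, 0) and, for α ∈ [1,2], E*_α = (1/r_x, a ↦ (2−α)·(μ_S(R_0^x − 1)/r_x)·π_x(a), a ↦ (α−1)·(μ_S(R_0^y − 1)/r_y)·π_y(a)). In particular, there are infinitely many equilibria in this case. -/

import Mathlib

open MeasureTheory Real Set

/-- Survival probability `π(a) = exp(-∫_0^a μ)`. -/
noncomputable def survival (μ : ℝ → ℝ) (a : ℝ) : ℝ :=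
  Real.exp (-(∫ s in (0:ℝ)..a, μ s))

/-- An equilibrium of the two-strain infection-age structured SI system:
`S ≥ 0`, `x, y ≥ 0` are continuously differentiable on `[0,∞)` with
`x' = -μₓ x`, `y' = -μ_y y`, renewal boundary conditions
`x 0 = S ∫ βₓ x`, `y 0 = S ∫ β_y y`, and the balance `Λ = μ_S S + x 0 + y 0`. -/
def IsEquilibrium (Λ μS : ℝ) (μx μy βx βy : ℝ → ℝ)
    (S : ℝ) (x y : ℝ → ℝ) : Prop :=
  0 ≤ S ∧ (∀ a, 0 ≤ a → 0 ≤ x a) ∧ (∀ a, 0 ≤ a → 0 ≤ y a) ∧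
  (∀ a, 0 ≤ a → HasDerivWithinAt x (-(μx a) * x a) (Ici 0) a) ∧
  (∀ a, 0 ≤ a → HasDerivWithinAt y (-(μy a) * y a) (Ici 0) a) ∧
  x 0 = S * ∫ a in Ici (0:ℝ), βx a * x a ∧
  y 0 = S * ∫ a in Ici (0:ℝ), βy a * y a ∧
  Λ = μS * S + x 0 + y 0

lemma survival_zero (μ : ℝ → ℝ) : survival μ 0 = 1 := by
  simp [survival]

lemma survival_pos (μ : ℝ → ℝ) (a : ℝ) : 0 < survival μ a := Real.exp_pos _

/-- FTC: derivative of `a ↦ ∫_0^a μ` within `Ici 0`. -/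
lemma intF_hasDeriv {μ : ℝ → ℝ} (hc : ContinuousOn μ (Ici 0)) {a : ℝ} (ha : 0 ≤ a) :
    HasDerivWithinAt (fun u => ∫ s in (0:ℝ)..u, μ s) (μ a) (Ici 0) a := by
  have hint : IntervalIntegrable μ volume 0 a := by
    apply ContinuousOn.intervalIntegrable
    apply hc.mono
    rw [uIcc_of_le ha]
    exact fun z hz => hz.1
  rcases eq_or_lt_of_le ha with rfl | ha'
  · exact intervalIntegral.integral_hasDerivWithinAt_right hint
      ((hc.stronglyMeasurableAtFilter_nhdsWithin measurableSet_Ici 0).filter_mono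
        (nhdsWithin_mono _ Ioi_subset_Ici_self))
      ((hc 0 self_mem_Ici).mono Ioi_subset_Ici_self)
  · have h1 : HasDerivAt (fun u => ∫ s in (0:ℝ)..u, μ s) (μ a) a :=
      intervalIntegral.integral_hasDerivAt_right hint
        ⟨Ici 0, Ici_mem_nhds ha', hc.aestronglyMeasurable measurableSet_Ici⟩
        (hc.continuousAt (Ici_mem_nhds ha'))
    exact h1.hasDerivWithinAt

lemma survival_hasDeriv {μ : ℝ → ℝ} (hc : ContinuousOn μ (Ici 0)) {a : ℝ} (ha : 0 ≤ a) :
    HasDerivWithinAt (survival μ) (-(μ a) * survival μ a) (Ici 0) a := by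
  have hF := (intF_hasDeriv hc ha).neg
  have := (Real.hasDerivAt_exp (-(∫ s in (0:ℝ)..a, μ s))).comp_hasDerivWithinAt a hF
  show HasDerivWithinAt (fun u => Real.exp (-(∫ s in (0:ℝ)..u, μ s))) (-(μ a) * survival μ a) (Ici 0) a
  simpa [survival, Function.comp_def, mul_comm] using this

/-- Solutions of the linear ODE `x' = -μ x` on `[0,∞)` are `x 0 · survival μ`. -/
lemma eq_mul_survival {μ x : ℝ → ℝ} (hc : ContinuousOn μ (Ici 0))
    (hx : ∀ a, 0 ≤ a → HasDerivWithinAt x (-(μ a) * x a) (Ici 0) a)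
    {a : ℝ} (ha : 0 ≤ a) : x a = x 0 * survival μ a := by
  set g : ℝ → ℝ := fun u => x u * Real.exp (∫ s in (0:ℝ)..u, μ s) with hgdef
  have hgd : ∀ u ∈ Ici (0:ℝ), HasDerivWithinAt g 0 (Ici 0) u := by
    intro u hu
    have hE : HasDerivWithinAt (fun v => Real.exp (∫ s in (0:ℝ)..v, μ s))
        (Real.exp (∫ s in (0:ℝ)..u, μ s) * μ u) (Ici 0) u :=
      (intF_hasDeriv hc hu).exp
    have h2 := (hx u hu).mul hE
    exact h2.congr_deriv (by ring)
  have hconst : g a = g 0 := by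
    refine (convex_Ici (0:ℝ)).is_const_of_fderivWithin_eq_zero
      (fun u hu => (hgd u hu).differentiableWithinAt) (fun u hu => ?_) ha self_mem_Ici
    have := (hgd u hu).hasFDerivWithinAt.fderivWithin (uniqueDiffOn_Ici 0 u hu)
    rw [this]
    ext t
    simp
  have h0 : g 0 = x 0 := by simp [hgdef]
  have hga : x a * Real.exp (∫ s in (0:ℝ)..a, μ s) = x 0 := by
    rw [← h0, ← hconst]
  rw [survival]
  have hepos : Real.exp (∫ s in (0:ℝ)..a, μ s) ≠ 0 := (Real.exp_pos _).ne'
  rw [Real.exp_neg]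
  field_simp
  linarith [hga]

/-- **If `R₀ˣ = R₀ʸ > 1`, the set of equilibria of the two-strain SI system is
exactly `{E₀} ∪ {E*_α : α ∈ [1,2]}`; in particular there are infinitely many
equilibria.** -/
theorem equilibria_continuum (Λ μS μ0 : ℝ) (μx μy βx βy : ℝ → ℝ)
    (hΛ : 0 < Λ) (hμS : 0 < μS) (hμ0 : 0 < μ0) (hμSμ0 : μ0 ≤ μS)
    (hμxc : ContinuousOn μx (Ici 0)) (hμyc : ContinuousOn μy (Ici 0))
    (hμxb : ∀ a, 0 ≤ a → μ0 ≤ μx a) (hμyb : ∀ a, 0 ≤ a → μ0 ≤ μy a)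
    (hβxm : Measurable βx) (hβym : Measurable βy)
    (hβxnn : ∀ a, 0 ≤ βx a) (hβynn : ∀ a, 0 ≤ βy a)
    (Mx My : ℝ) (hβxM : ∀ a, βx a ≤ Mx) (hβyM : ∀ a, βy a ≤ My)
    (rx ry : ℝ)
    (hrx : rx = ∫ a in Ici (0:ℝ), βx a * survival μx a)
    (hry : ry = ∫ a in Ici (0:ℝ), βy a * survival μy a)
    (hrxpos : 0 < rx) (hrypos : 0 < ry)
    (R0x R0y : ℝ) (hR0x : R0x = Λ * rx / μS) (hR0y : R0y = Λ * ry / μS)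
    (R0x R0y : ℝ) (hR0x : R0x = Λ * rx / μS) (hR0y : R0y = Λ * ry / μS)
    (heq : R0x = R0y) (hRx : 1 < R0x) :
    IsEquilibrium Λ μS μx μy βx βy (Λ / μS) (fun _ => 0) (fun _ => 0) ∧
    (∀ α ∈ Icc (1:ℝ) 2,
      IsEquilibrium Λ μS μx μy βx βy (1 / rx)
        (fun a => (2 - α) * (μS * (R0x - 1) / rx) * survival μx a)
        (fun a => (α - 1) * (μS * (R0y - 1) / ry) * survival μy a)) ∧
    (∀ S x y, IsEquilibrium Λ μS μx μy βx βy S x y →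
      (S = Λ / μS ∧ (∀ a, 0 ≤ a → x a = 0) ∧ (∀ a, 0 ≤ a → y a = 0)) ∨
      (∃ α ∈ Icc (1:ℝ) 2, S = 1 / rx ∧
        (∀ a, 0 ≤ a → x a = (2 - α) * (μS * (R0x - 1) / rx) * survival μx a) ∧
        (∀ a, 0 ≤ a → y a = (α - 1) * (μS * (R0y - 1) / ry) * survival μy a))) ∧
    Set.Infinite {p : ℝ × (ℝ → ℝ) × (ℝ → ℝ) |
      IsEquilibrium Λ μS μx μy βx βy p.1 p.2.1 p.2.2} := by
  -- basic consequences
  have hrxy : rx = ry := by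
    rw [hR0x, hR0y] at heq
    field_simp at heq
    exact heq
  set K : ℝ := μS * (R0x - 1) / rx with hKdef
  have hKval : K = Λ - μS / rx := by
    rw [hKdef, hR0x]
    field_simp
  have hKpos : 0 < K := by
    rw [hKdef]
    exact div_pos (mul_pos hμS (by linarith)) hrxpos
  have hK' : μS * (R0y - 1) / ry = K := by
    rw [hKdef, ← heq, ← hrxy]
  -- Part 1: E₀ is an equilibrium
  have h1 : IsEquilibrium Λ μS μx μy βx βy (Λ / μS) (fun _ => 0) (fun _ => 0) := by
    refine ⟨(div_pos hΛ hμS).le, fun a _ => le_refl 0, fun a _ => le_refl 0,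
      fun a _ => by simpa using hasDerivWithinAt_const a (Ici (0:ℝ)) (0:ℝ),
      fun a _ => by simpa using hasDerivWithinAt_const a (Ici (0:ℝ)) (0:ℝ),
      by simp, by simp, by field_simp; ring⟩
  -- Part 2: each E*_α is an equilibrium
  have h2 : ∀ α ∈ Icc (1:ℝ) 2,
      IsEquilibrium Λ μS μx μy βx βy (1 / rx)
        (fun a => (2 - α) * (μS * (R0x - 1) / rx) * survival μx a)
        (fun a => (α - 1) * (μS * (R0y - 1) / ry) * survival μy a) := by
    intro α hα
    obtain ⟨hα1, hα2⟩ := hα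
    have hcx : 0 ≤ (2 - α) * K := mul_nonneg (by linarith) hKpos.le
    have hcy : 0 ≤ (α - 1) * K := mul_nonneg (by linarith) hKpos.le
    refine ⟨by positivity, fun a _ => ?_, fun a _ => ?_, fun a ha => ?_, fun a ha => ?_,
      ?_, ?_, ?_⟩
    · exact mul_nonneg hcx (survival_pos μx a).le
    · rw [hK']; exact mul_nonneg hcy (survival_pos μy a).le
    · have := (survival_hasDeriv hμxc ha).const_mul ((2 - α) * (μS * (R0x - 1) / rx))
      exact this.congr_deriv (by beta_reduce; ring)
    · have := (survival_hasDeriv hμyc ha).const_mul ((α - 1) * (μS * (R0y - 1) / ry))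
      exact this.congr_deriv (by beta_reduce; ring)
    · have hI : ∫ a in Ici (0:ℝ), βx a * ((2 - α) * (μS * (R0x - 1) / rx) * survival μx a)
          = (2 - α) * (μS * (R0x - 1) / rx) * rx := by
        nth_rewrite 3 [hrx]
        rw [← MeasureTheory.integral_const_mul]
        congr 1
        funext a
        ring
      simp only [survival_zero, mul_one]
      rw [hI]
      field_simp
    · have hI : ∫ a in Ici (0:ℝ), βy a * ((α - 1) * (μS * (R0y - 1) / ry) * survival μy a)
          = (α - 1) * (μS * (R0y - 1) / ry) * ry := by
        nth_rewrite 3 [hry]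
        rw [← MeasureTheory.integral_const_mul]
        congr 1
        funext a
        ring
      simp only [survival_zero, mul_one]
      rw [hI, ← hrxy]
      field_simp
    · simp only [survival_zero, mul_one, hK', ← hKdef]
      rw [hKval]
      field_simp
      ring
  -- Part 3: classification
  have h3 : ∀ S x y, IsEquilibrium Λ μS μx μy βx βy S x y →
      (S = Λ / μS ∧ (∀ a, 0 ≤ a → x a = 0) ∧ (∀ a, 0 ≤ a → y a = 0)) ∨
      (∃ α ∈ Icc (1:ℝ) 2, S = 1 / rx ∧
        (∀ a, 0 ≤ a → x a = (2 - α) * (μS * (R0x - 1) / rx) * survival μx a) ∧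
        (∀ a, 0 ≤ a → y a = (α - 1) * (μS * (R0y - 1) / ry) * survival μy a)) := by
    intro S x y hE
    obtain ⟨hS, hxnn, hynn, hxd, hyd, hxb, hyb, hbal⟩ := hE
    have hxs : ∀ a, 0 ≤ a → x a = x 0 * survival μx a :=
      fun a ha => eq_mul_survival hμxc hxd ha
    have hys : ∀ a, 0 ≤ a → y a = y 0 * survival μy a :=
      fun a ha => eq_mul_survival hμyc hyd ha
    have hxI : ∫ a in Ici (0:ℝ), βx a * x a = x 0 * rx := by
      rw [hrx, ← MeasureTheory.integral_const_mul]
      refine setIntegral_congr_fun measurableSet_Ici fun a ha => ?_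
      rw [hxs a ha]
      ring
    have hyI : ∫ a in Ici (0:ℝ), βy a * y a = y 0 * ry := by
      rw [hry, ← MeasureTheory.integral_const_mul]
      refine setIntegral_congr_fun measurableSet_Ici fun a ha => ?_
      rw [hys a ha]
      ring
    rw [hxI] at hxb
    rw [hyI] at hyb
    have hx0 : 0 ≤ x 0 := hxnn 0 le_rfl
    have hy0 : 0 ≤ y 0 := hynn 0 le_rfl
    by_cases h0 : x 0 = 0 ∧ y 0 = 0
    · left
      obtain ⟨hx00, hy00⟩ := h0
      refine ⟨?_, fun a ha => by rw [hxs a ha, hx00, zero_mul],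
        fun a ha => by rw [hys a ha, hy00, zero_mul]⟩
      rw [hx00, hy00] at hbal
      field_simp [hbal]
      linarith
    · right
      -- S = 1/rx
      have hSrx : S = 1 / rx := by
        rcases not_and_or.mp h0 with hx0' | hy0'
        · have : x 0 * (1 - S * rx) = 0 := by linarith [hxb, mul_comm S (x 0 * rx)]
          have h2 : 1 - S * rx = 0 := by
            rcases mul_eq_zero.mp this with h | h
            · exact absurd h hx0'
            · exact h
          field_simp
          linarith
        · have : y 0 * (1 - S * ry) = 0 := by linarith [hyb, mul_comm S (y 0 * ry)]
          have h2 : 1 - S * ry = 0 := by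
            rcases mul_eq_zero.mp this with h | h
            · exact absurd h hy0'
            · exact h
          rw [hrxy]
          field_simp
          linarith
      have hsum : x 0 + y 0 = K := by
        rw [hSrx] at hbal
        rw [hKval]
        have : μS * (1 / rx) = μS / rx := by ring
        linarith [hbal, this]
      refine ⟨1 + y 0 / K,
        ⟨by have := div_nonneg hy0 hKpos.le; linarith, ?_⟩, hSrx,
        fun a ha => ?_, fun a ha => ?_⟩
      · have hyK : y 0 ≤ K := by linarith
        have : y 0 / K ≤ 1 := by
          rw [div_le_one hKpos]
          exact hyK
        linarith
      · have hx0v : (2 - (1 + y 0 / K)) * K = x 0 := by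
          field_simp
          linarith
        rw [hxs a ha, ← hKdef, hx0v]
      · have hy0v : (1 + y 0 / K - 1) * K = y 0 := by
          field_simp
          ring
        rw [hys a ha, hK', hy0v]
  -- Part 4: infinitude
  have h4 : Set.Infinite {p : ℝ × (ℝ → ℝ) × (ℝ → ℝ) |
      IsEquilibrium Λ μS μx μy βx βy p.1 p.2.1 p.2.2} := by
    set Φ : ℝ → ℝ × (ℝ → ℝ) × (ℝ → ℝ) := fun α =>
      (1 / rx, fun a => (2 - α) * (μS * (R0x - 1) / rx) * survival μx a,
        fun a => (α - 1) * (μS * (R0y - 1) / ry) * survival μy a) with hΦ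
    have hsub : Φ '' Icc (1:ℝ) 2 ⊆ {p : ℝ × (ℝ → ℝ) × (ℝ → ℝ) |
        IsEquilibrium Λ μS μx μy βx βy p.1 p.2.1 p.2.2} := by
      rintro p ⟨α, hα, rfl⟩
      exact h2 α hα
    refine Set.Infinite.mono hsub ?_
    refine Set.Infinite.image ?_ (Set.Icc_infinite (by norm_num))
    intro a ha b hb hab
    have h21 : (Φ a).2.1 = (Φ b).2.1 := by rw [hab]
    have := congrFun h21 0
    simp only [hΦ, survival_zero, mul_one] at this
    have hKne : μS * (R0x - 1) / rx ≠ 0 := hKpos.ne'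
    have : (2 - a) = (2 - b) := mul_right_cancel₀ hKne this
    linarith
  exact ⟨h1, h2, h3, h4⟩
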